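/- For every k ≥ 1 and every pointed path connected space (X, x₀), the Peano map p : PX → X induces an isomorphism of homotopy groups π_k(PX, x₀) ≅ π_k(X, x₀). -/

import Mathlib

/-- The universal Peano space topology on `X`. -/
def peanoTopology (X : Type*) [TopologicalSpace X] : TopologicalSpace X :=
  TopologicalSpace.generateFrom
    {s | ∃ (U : Set X) (x : X), IsOpen U ∧ x ∈ U ∧ s = pathComponentIn U x}

/-- The universal Peano space `PX`: same underlying set, Peano topology. -/
def Peano (X : Type*) := X

instance (X : Type*) [TopologicalSpace X] : TopologicalSpace (Peano X) := peanoTopology X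

/-- The universal Peano map, as a function (it is the identity). -/
def peanoMap (X : Type*) [TopologicalSpace X] : Peano X → X := id

open Set Topology Filter unitInterval

section LocInstances

theorem IsPathConnected.prod'' {X Y : Type*} [TopologicalSpace X] [TopologicalSpace Y]
    {s : Set X} {t : Set Y} (hs : IsPathConnected s) (ht : IsPathConnected t) :
    IsPathConnected (s ×ˢ t) := by
  obtain ⟨a, ha, hsa⟩ := hs
  obtain ⟨b, hb, htb⟩ := ht
  refine ⟨(a, b), ⟨ha, hb⟩, ?_⟩
  rintro ⟨c, d⟩ ⟨hc, hd⟩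
  obtain ⟨γ₁, hγ₁⟩ := hsa hc
  obtain ⟨γ₂, hγ₂⟩ := htb hd
  exact ⟨γ₁.prod γ₂, fun u => ⟨hγ₁ u, hγ₂ u⟩⟩

instance instLocPathConnectedProd {X Y : Type*} [TopologicalSpace X] [TopologicalSpace Y]
    [LocallyPathConnectedSpace X] [LocallyPathConnectedSpace Y] : LocallyPathConnectedSpace (X × Y) :=
  .of_bases (fun z => (path_connected_basis z.1).prod_nhds (path_connected_basis z.2))
    (fun _ _ h => h.1.2.prod'' h.2.2)

theorem isPathConnected_univ_pi' {ι : Type*} {X : ι → Type*} [∀ i, TopologicalSpace (X i)]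
    {s : ∀ i, Set (X i)} (hs : ∀ i, IsPathConnected (s i)) :
    IsPathConnected (Set.pi univ s) := by
  choose a ha hp using hs
  refine ⟨a, fun i _ => ha i, ?_⟩
  intro y hy
  choose γ hγ using fun i => hp i (hy i (mem_univ i))
  exact ⟨Path.pi γ, fun u i _ => hγ i u⟩

instance instLocPathConnectedPi {ι : Type*} [Finite ι] {X : ι → Type*}
    [∀ i, TopologicalSpace (X i)] [∀ i, LocallyPathConnectedSpace (X i)] :
    LocallyPathConnectedSpace (∀ i, X i) := by
  rw [locPathConnectedSpace_iff_pathComponentIn_mem_nhds]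
  intro f u hu hfu
  have hmem : u ∈ 𝓝 f := hu.mem_nhds hfu
  rw [nhds_pi] at hmem
  obtain ⟨Idx, -, t, ht, hts⟩ := Filter.mem_pi.mp hmem
  have h' : ∀ i, ∃ v, (v ∈ 𝓝 (f i) ∧ IsPathConnected v) ∧ v ⊆ t i := fun i =>
    (path_connected_basis (f i)).mem_iff.mp (ht i)
  choose v hv hvt using h'
  have hvu : Set.pi univ v ⊆ u := fun g hg =>
    hts fun i _ => hvt i (hg i (mem_univ i))
  have hfv : f ∈ Set.pi univ v := fun i _ => mem_of_mem_nhds (hv i).1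
  have hpc : IsPathConnected (Set.pi univ v) := isPathConnected_univ_pi' fun i => (hv i).2
  refine Filter.mem_of_superset ?_ (hpc.subset_pathComponentIn hfv hvu)
  exact set_pi_mem_nhds finite_univ fun i _ => (hv i).1

instance instLocPathConnectedUnitInterval : LocallyPathConnectedSpace unitInterval := by
  rw [locPathConnectedSpace_iff_pathComponentIn_mem_nhds]
  intro x u hu hxu
  obtain ⟨ε, hε, hball⟩ := Metric.isOpen_iff.mp hu x hxu
  have hW : IsPathConnected (Metric.ball (x : ℝ) ε ∩ unitInterval) :=
    ((convex_ball _ _).inter (convex_Icc 0 1)).isPathConnected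
      ⟨x, Metric.mem_ball_self hε, x.2⟩
  have hpre : IsPathConnected ((↑) ⁻¹' (Metric.ball (x : ℝ) ε ∩ unitInterval) :
      Set unitInterval) := hW.preimage_coe inter_subset_right
  have heq : ((↑) ⁻¹' (Metric.ball (x : ℝ) ε ∩ unitInterval) : Set unitInterval) =
      Metric.ball x ε := by
    ext y
    simp [Metric.mem_ball, Subtype.dist_eq, y.2]
  rw [heq] at hpre
  refine Filter.mem_of_superset (Metric.ball_mem_nhds x hε) ?_
  exact hpre.subset_pathComponentIn (Metric.mem_ball_self hε) hball

end LocInstances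

section PeanoLemmas

variable {X : Type*} [TopologicalSpace X]

theorem isOpen_peano_preimage {U : Set X} (hU : IsOpen U) : IsOpen (peanoMap X ⁻¹' U) := by
  have hrep : peanoMap X ⁻¹' U = ⋃ x ∈ U, peanoMap X ⁻¹' (pathComponentIn U x) := by
    apply Set.Subset.antisymm
    · intro y hy
      have h1 : peanoMap X y ∈ U := hy
      have h2 : peanoMap X y ∈ pathComponentIn U (peanoMap X y) :=
        mem_pathComponentIn_self h1
      exact Set.mem_biUnion h1 h2
    · intro y hy
      obtain ⟨x, _, hy⟩ := Set.mem_iUnion₂.mp hy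
      have h3 : peanoMap X y ∈ pathComponentIn U x := hy
      have h4 : peanoMap X y ∈ U := pathComponentIn_subset h3
      exact h4
  rw [hrep]
  refine isOpen_biUnion fun x hx => ?_
  exact TopologicalSpace.GenerateOpen.basic _ ⟨U, x, hU, hx, rfl⟩

theorem peanoMap_continuous : Continuous (peanoMap X) :=
  continuous_def.mpr fun _ hU => isOpen_peano_preimage hU

theorem continuous_toPeano {Y : Type*} [TopologicalSpace Y] [LocallyPathConnectedSpace Y]
    {f : Y → X} (hf : Continuous f) : Continuous (show Y → Peano X from f) := by
  apply continuous_generateFrom_iff.mpr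
  rintro s ⟨U, x, hU, hxU, rfl⟩
  rw [isOpen_iff_mem_nhds]
  intro y hy
  have hfyU : f y ∈ U := pathComponentIn_subset hy
  have hopen : IsOpen (f ⁻¹' U) := hU.preimage hf
  have h1 : pathComponentIn (f ⁻¹' U) y ∈ 𝓝 y :=
    (hopen.pathComponentIn y).mem_nhds (mem_pathComponentIn_self hfyU)
  refine Filter.mem_of_superset h1 ?_
  have hpc : IsPathConnected (f '' pathComponentIn (f ⁻¹' U) y) :=
    (isPathConnected_pathComponentIn (show y ∈ f ⁻¹' U from hfyU)).image hf
  have him : f '' pathComponentIn (f ⁻¹' U) y ⊆ U := by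
    rintro z ⟨w, hw, rfl⟩
    have hw' : w ∈ f ⁻¹' U := pathComponentIn_subset hw
    exact hw' 
  have hsub : f '' pathComponentIn (f ⁻¹' U) y ⊆ pathComponentIn U (f y) :=
    hpc.subset_pathComponentIn ⟨y, mem_pathComponentIn_self hfyU, rfl⟩ him
  rw [← pathComponentIn_congr hy]
  intro w hw
  exact hsub ⟨w, hw, rfl⟩

end PeanoLemmas

section Main

open Topology.Homotopy GenLoop

variable {X : Type*} [TopologicalSpace X] {x₀ : X} {n : ℕ}

/-- The Peano map as a continuous map. -/
def peanoCMap (X : Type*) [TopologicalSpace X] : C(Peano X, X) :=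
  ⟨peanoMap X, peanoMap_continuous⟩

/-- Push a generalized loop in `Peano X` forward to `X`. -/
def genLoopToX (a : Ω^ (Fin (n + 1)) (Peano X) x₀) : Ω^ (Fin (n + 1)) X x₀ :=
  ⟨(peanoCMap X).comp a.1, fun y hy => congrArg (peanoMap X) (a.2 y hy)⟩

/-- Lift a generalized loop in `X` to `Peano X`. -/
def genLoopToP (b : Ω^ (Fin (n + 1)) X x₀) : Ω^ (Fin (n + 1)) (Peano X) x₀ :=
  ⟨⟨show (Fin (n + 1) → unitInterval) → Peano X from b.1,
    continuous_toPeano b.1.continuous⟩, b.2⟩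

theorem genLoopToX_homotopic {a a' : Ω^ (Fin (n + 1)) (Peano X) x₀}
    (h : GenLoop.Homotopic a a') : GenLoop.Homotopic (genLoopToX a) (genLoopToX a') := by
  obtain ⟨H⟩ := h
  exact ⟨{
    toFun := fun p => peanoMap X (H p)
    continuous_toFun := peanoMap_continuous.comp H.continuous
    map_zero_left := fun y => congrArg (peanoMap X) (H.map_zero_left y)
    map_one_left := fun y => congrArg (peanoMap X) (H.map_one_left y)
    prop' := fun t y hy => congrArg (peanoMap X) (H.prop' t y hy) }⟩

theorem genLoopToP_homotopic {b b' : Ω^ (Fin (n + 1)) X x₀}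
    (h : GenLoop.Homotopic b b') : GenLoop.Homotopic (genLoopToP b) (genLoopToP b') := by
  obtain ⟨H⟩ := h
  exact ⟨{
    toFun := show (unitInterval × (Fin (n + 1) → unitInterval)) → Peano X from H
    continuous_toFun := continuous_toPeano H.continuous
    map_zero_left := fun y => H.map_zero_left y
    map_one_left := fun y => H.map_one_left y
    prop' := fun t y hy => H.prop' t y hy }⟩

noncomputable instance instGroupPeanoHG (x₀ : X) (n : ℕ) :
    Group (HomotopyGroup (Fin (n + 1)) (Peano X) x₀) :=
  @HomotopyGroup.group (Peano X) _ x₀ (Fin (n + 1)) _ _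

/-- `Quotient.mk` into the homotopy group. -/
def mkH (p : GenLoop (Fin (n + 1)) X x₀) : HomotopyGroup (Fin (n + 1)) X x₀ :=
  Quotient.mk _ p

/-- The forward map on homotopy groups. -/
def peanoF (x₀ : X) (n : ℕ) :
    HomotopyGroup (Fin (n + 1)) (Peano X) x₀ → HomotopyGroup (Fin (n + 1)) X x₀ :=
  Quotient.map genLoopToX fun _ _ h => genLoopToX_homotopic h

/-- The backward map on homotopy groups. -/
def peanoG (x₀ : X) (n : ℕ) :
    HomotopyGroup (Fin (n + 1)) X x₀ → HomotopyGroup (Fin (n + 1)) (Peano X) x₀ :=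
  Quotient.map genLoopToP fun _ _ h => genLoopToP_homotopic h

theorem genLoopToX_transAt (i : Fin (n + 1)) (p q : Ω^ (Fin (n + 1)) (Peano X) x₀) :
    genLoopToX (transAt i p q) = transAt i (genLoopToX p) (genLoopToX q) := by
  ext y
  rfl

theorem peanoF_mul (x₀ : X) (n : ℕ)
    (u v : HomotopyGroup (Fin (n + 1)) (Peano X) x₀) :
    peanoF x₀ n (u * v) = peanoF x₀ n u * peanoF x₀ n v := by
  refine Quotient.inductionOn₂ u v fun p q => ?_
  have h1 : mkH p * mkH q = mkH (transAt 0 q p) :=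
    HomotopyGroup.mul_spec (i := 0)
  have h2 : mkH (genLoopToX p) * mkH (genLoopToX q)
      = mkH (transAt 0 (genLoopToX q) (genLoopToX p)) :=
    HomotopyGroup.mul_spec (i := 0)
  show peanoF x₀ n (mkH p * mkH q) = mkH (genLoopToX p) * mkH (genLoopToX q)
  rw [h1, h2]
  exact congrArg (mkH (X := X)) (genLoopToX_transAt 0 q p)

end Main

/-- For every `k ≥ 1` (written `k = n + 1`) and every pointed path connected space
`(X, x₀)`, the Peano map induces an isomorphism `π_k(PX, x₀) ≅ π_k(X, x₀)`:
there is a group isomorphism sending the class of each generalized loop in `PX`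
to the class of the loop with the same underlying function in `X`. -/
theorem peano_homotopyGroup_iso {X : Type*} [TopologicalSpace X] [PathConnectedSpace X]
    (x₀ : X) (n : ℕ) :
    ∃ e : @MulEquiv (HomotopyGroup (Fin (n + 1)) (Peano X) x₀) (HomotopyGroup (Fin (n + 1)) X x₀)
        (@MulOne.toMul _ (@MulOneClass.toMulOne _ (@Monoid.toMulOneClass _ (@DivInvMonoid.toMonoid _
          (@Group.toDivInvMonoid _ (@HomotopyGroup.group (Peano X) _ x₀ (Fin (n + 1)) _ _)))))) _,
      ∀ (a : GenLoop (Fin (n + 1)) (Peano X) x₀) (b : GenLoop (Fin (n + 1)) X x₀),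
        (∀ p, (b : C((Fin (n + 1)) → unitInterval, X)) p
            = peanoMap X ((a : C((Fin (n + 1)) → unitInterval, Peano X)) p)) →
        e (Quotient.mk (@GenLoop.Homotopic.setoid (Peano X) _ (Fin (n + 1)) x₀) a)
          = Quotient.mk (GenLoop.Homotopic.setoid (Fin (n + 1)) x₀) b := by
  refine ⟨{
    toFun := peanoF x₀ n
    invFun := peanoG x₀ n
    left_inv := by
      rintro ⟨a⟩
      exact congrArg (Quotient.mk _) (GenLoop.ext _ _ fun y => rfl)
    right_inv := by
      rintro ⟨b⟩
      exact congrArg (Quotient.mk _) (GenLoop.ext _ _ fun y => rfl)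
    map_mul' := peanoF_mul x₀ n }, ?_⟩
  intro a b hab
  have hba : genLoopToX a = b := GenLoop.ext _ _ fun y => (hab y).symm
  show peanoF x₀ n (Quotient.mk _ a) = _
  rw [show peanoF x₀ n (Quotient.mk _ a)
      = Quotient.mk (GenLoop.Homotopic.setoid (Fin (n + 1)) x₀) (genLoopToX a) from rfl, hba]
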